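/- Let n ≥ 1 be an integer and let a₂, a₁, b₂, b₁ be real numbers. For j ∈ ℕ set λ_j = j(b₂ + (j−1)a₂), and assume b₁ + (j+2)a₁ ≠ 0 for every 0 ≤ j ≤ n−2. Define C₀ = 1 and, for 1 ≤ k ≤ n−1, C_k = (1/k!) · (∏_{j=0}^{k−1} (λ_n − λ_{j+1})) / (∏_{j=0}^{k−1} (b₁ + (j+2)a₁)). Then the polynomial function y(x) = Σ_{k=0}^{n−1} C_k x^{k+1} satisfies x²(a₂x + a₁)y''(x) + x(b₂x + b₁)y'(x) − (n(b₂ + (n−1)a₂)x + b₁)y(x) = 0 for all real x. -/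

import Mathlib

/-- Explicit coefficients of the degree-`n` polynomial solution of the special exceptional
X₁ equation `x²(a₂x+a₁)y'' + x(b₂x+b₁)y' − (n(b₂+(n−1)a₂)x + b₁)y = 0`. -/
theorem x1_special_case_polynomial_solution
    (a2 a1 b2 b1 : ℝ) (n : ℕ) (hn : 1 ≤ n)
    (hden : ∀ j : ℕ, (j : ℤ) ≤ (n : ℤ) - 2 → b1 + ((j : ℝ) + 2) * a1 ≠ 0)
    (C : ℕ → ℝ) (hC0 : C 0 = 1)
    (hCk : ∀ k : ℕ, 1 ≤ k → k ≤ n - 1 →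
      C k = (1 / (Nat.factorial k : ℝ))
        * (∏ j ∈ Finset.range k,
            ((n : ℝ) * (b2 + ((n : ℝ) - 1) * a2)
              - ((j : ℝ) + 1) * (b2 + (((j : ℝ) + 1) - 1) * a2)))
        / (∏ j ∈ Finset.range k, (b1 + ((j : ℝ) + 2) * a1))) :
    ∀ x : ℝ,
      x ^ 2 * (a2 * x + a1) *
          deriv (deriv (fun t : ℝ => ∑ k ∈ Finset.range n, C k * t ^ (k + 1))) x
        + x * (b2 * x + b1) *
          deriv (fun t : ℝ => ∑ k ∈ Finset.range n, C k * t ^ (k + 1)) x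
        - ((n : ℝ) * (b2 + ((n : ℝ) - 1) * a2) * x + b1) *
          (∑ k ∈ Finset.range n, C k * x ^ (k + 1)) = 0 := by
  obtain ⟨m, rfl⟩ : ∃ m, n = m + 1 := ⟨n - 1, (Nat.succ_pred_eq_of_pos hn).symm⟩
  have hden' : ∀ j : ℕ, j < m → b1 + ((j:ℝ)+2) * a1 ≠ 0 := by
    intro j hj; apply hden; push_cast; omega
  have hP : ∀ k : ℕ, k ≤ m → (∏ j ∈ Finset.range k, (b1 + ((j:ℝ)+2)*a1)) ≠ 0 := by
    intro k hk
    exact Finset.prod_ne_zero_iff.mpr fun j hj =>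
      hden' j (lt_of_lt_of_le (Finset.mem_range.mp hj) hk)
  -- uniform formula for C k
  have hCall : ∀ k : ℕ, k ≤ m →
      C k = (1 / (Nat.factorial k : ℝ))
        * (∏ j ∈ Finset.range k,
            (((m:ℝ)+1) * (b2 + (m:ℝ) * a2) - ((j:ℝ)+1) * (b2 + (j:ℝ)*a2)))
        / (∏ j ∈ Finset.range k, (b1 + ((j:ℝ)+2)*a1)) := by
    intro k hk
    rcases Nat.eq_zero_or_pos k with h0 | h1
    · subst h0; simpa using hC0
    · rw [hCk k h1 (by omega)]
      congr 2
      apply Finset.prod_congr rfl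
      intro j _
      push_cast
      ring
  -- key recursion
  have hrec : ∀ k : ℕ, k < m →
      C (k+1) * (((k:ℝ)+1) * (b1 + ((k:ℝ)+2)*a1))
        = C k * (((m:ℝ)+1) * (b2 + (m:ℝ) * a2) - ((k:ℝ)+1) * (b2 + (k:ℝ)*a2)) := by
    intro k hk
    rw [hCall k hk.le, hCall (k+1) hk]
    rw [Finset.prod_range_succ, Finset.prod_range_succ, Nat.factorial_succ]
    have h1 := hP k hk.le
    have h2 := hden' k hk
    have h3 : (Nat.factorial k : ℝ) ≠ 0 := Nat.cast_ne_zero.mpr k.factorial_ne_zero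
    have h4 : ((k:ℝ)+1) ≠ 0 := by positivity
    simp only [mul_comm _ a1] at h1 h2 ⊢
    field_simp
    push_cast
    ring
  -- first derivative
  have hd1 : deriv (fun t : ℝ => ∑ k ∈ Finset.range (m+1), C k * t ^ (k + 1))
      = fun x : ℝ => ∑ k ∈ Finset.range (m+1), C k * (((k:ℝ)+1) * x ^ k) := by
    funext x
    rw [deriv_fun_sum (fun k _ => (differentiableAt_pow _).const_mul _)]
    apply Finset.sum_congr rfl
    intro k _
    rw [deriv_const_mul _ (differentiableAt_pow _), deriv_pow_field]
    push_cast
    ring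
  intro x
  rw [hd1]
  -- second derivative
  have hd2 : deriv (fun x : ℝ => ∑ k ∈ Finset.range (m+1), C k * (((k:ℝ)+1) * x ^ k)) x
      = ∑ k ∈ Finset.range (m+1), C k * (((k:ℝ)+1) * ((k:ℝ) * x ^ (k - 1))) := by
    rw [deriv_fun_sum (fun k _ => ((differentiableAt_pow _).const_mul _).const_mul _)]
    apply Finset.sum_congr rfl
    intro k _
    rw [deriv_const_mul _ ((differentiableAt_pow _).const_mul _),
        deriv_const_mul _ (differentiableAt_pow _), deriv_pow_field]
  rw [hd2]
  rw [Finset.mul_sum, Finset.mul_sum, Finset.mul_sum, ← Finset.sum_add_distrib,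
      ← Finset.sum_sub_distrib]
  have hterm : ∀ k ∈ Finset.range (m+1),
      (x ^ 2 * (a2 * x + a1) * (C k * (((k:ℝ)+1) * ((k:ℝ) * x ^ (k - 1))))
        + x * (b2 * x + b1) * (C k * (((k:ℝ)+1) * x ^ k)))
        - (((m+1:ℕ) : ℝ) * (b2 + (((m+1:ℕ) : ℝ) - 1) * a2) * x + b1) * (C k * x ^ (k + 1))
      = C k * (((k:ℝ)+1) * (b2 + (k:ℝ)*a2) - ((m:ℝ)+1) * (b2 + (m:ℝ)*a2)) * x ^ (k+2)
        + C k * ((k:ℝ) * (((k:ℝ)+1)*a1 + b1)) * x ^ (k+1) := by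
    intro k _
    rcases k with _ | k
    · push_cast
      norm_num
      ring
    · have : (k + 1) - 1 = k := by omega
      rw [this]
      push_cast [pow_succ]
      ring
  rw [Finset.sum_congr rfl hterm, Finset.sum_add_distrib, Finset.sum_range_succ,
      Finset.sum_range_succ']
  have hA : C m * (((m:ℝ)+1) * (b2 + (m:ℝ)*a2) - ((m:ℝ)+1) * (b2 + (m:ℝ)*a2)) * x ^ (m+2)
      = 0 := by ring
  rw [hA, add_zero]
  have hB : C 0 * (((0:ℕ):ℝ) * ((((0:ℕ):ℝ)+1)*a1 + b1)) * x ^ (0+1) = 0 := by norm_num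
  rw [hB, add_zero]
  rw [← Finset.sum_add_distrib]
  apply Finset.sum_eq_zero
  intro k hk
  have h := hrec k (Finset.mem_range.mp hk)
  push_cast
  linear_combination x ^ (k+2) * h
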